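/- Fix ρ ∈ (0,1) and define g_ρ : closure(𝔻) → ℝ³ by g_ρ(x,y) = 2( (ρ(x²+y²)−x+y)(ρ(x²+y²)−x−y)/(ρ²(x²+y²)−2ρx+1)², 2(x−ρ(x²+y²))y/(ρ²(x²+y²)−2ρx+1)², 0 ). Then: (i) the denominator ρ²(x²+y²)−2ρx+1 is strictly positive on the closed unit disk; (ii) each component of g_ρ is harmonic in 𝔻; (iii) for every (x,y) ∈ ∂𝔻, g_ρ(x,y) = g̃_ρ(x,y), where g̃_ρ(x,y) = 2( ((x−ρ)²−y²)/((x−ρ)²+y²)², 2(x−ρ)y/((x−ρ)²+y²)², 0 ). In other words, g_ρ is the harmonic extension to 𝔻 of g̃_ρ. -/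

import Mathlib

noncomputable section

open Metric

/-- Partial derivative in the `x` direction of a scalar function, identifying `ℝ²` with `ℂ`
via `z = x + iy`. -/
def px (f : ℂ → ℝ) (z : ℂ) : ℝ := fderiv ℝ f z 1

/-- Partial derivative in the `y` direction. -/
def py (f : ℂ → ℝ) (z : ℂ) : ℝ := fderiv ℝ f z Complex.I

/-- `f` is harmonic on `s`: it is `C²` there and its Laplacian vanishes on `s`. -/
def HarmonicOnSet (f : ℂ → ℝ) (s : Set ℂ) : Prop :=
  ContDiffOn ℝ 2 f s ∧ ∀ z ∈ s, px (px f) z + py (py f) z = 0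

/-- The denominator `ρ²(x²+y²) − 2ρx + 1`. -/
def denRho (ρ : ℝ) (z : ℂ) : ℝ := ρ ^ 2 * (z.re ^ 2 + z.im ^ 2) - 2 * ρ * z.re + 1

/-- First component of `g_ρ`. -/
def gRho1 (ρ : ℝ) (z : ℂ) : ℝ :=
  2 * ((ρ * (z.re ^ 2 + z.im ^ 2) - z.re + z.im) * (ρ * (z.re ^ 2 + z.im ^ 2) - z.re - z.im) /
    (denRho ρ z) ^ 2)

/-- Second component of `g_ρ`. -/
def gRho2 (ρ : ℝ) (z : ℂ) : ℝ :=
  2 * (2 * (z.re - ρ * (z.re ^ 2 + z.im ^ 2)) * z.im / (denRho ρ z) ^ 2)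

/- ### Auxiliary lemmas -/

lemma aux_fderiv_re_apply (f : ℂ → ℂ) (z v : ℂ) (hf : DifferentiableAt ℂ f z) :
    fderiv ℝ (fun w => (f w).re) z v = (deriv f z * v).re := by
  have h1 : HasFDerivAt f (ContinuousLinearMap.smulRight (1 : ℂ →L[ℂ] ℂ) (deriv f z)) z :=
    hf.hasDerivAt.hasFDerivAt
  have h2 := Complex.reCLM.hasFDerivAt.comp z (h1.restrictScalars ℝ)
  have h3 : (fun w => (f w).re) = (⇑Complex.reCLM ∘ f) := rfl
  rw [h3, h2.fderiv]
  simp [mul_comm]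

lemma aux_fderiv_im_apply (f : ℂ → ℂ) (z v : ℂ) (hf : DifferentiableAt ℂ f z) :
    fderiv ℝ (fun w => (f w).im) z v = (deriv f z * v).im := by
  have h1 : HasFDerivAt f (ContinuousLinearMap.smulRight (1 : ℂ →L[ℂ] ℂ) (deriv f z)) z :=
    hf.hasDerivAt.hasFDerivAt
  have h2 := Complex.imCLM.hasFDerivAt.comp z (h1.restrictScalars ℝ)
  have h3 : (fun w => (f w).im) = (⇑Complex.imCLM ∘ f) := rfl
  rw [h3, h2.fderiv]
  simp [mul_comm]

/-- Real and imaginary parts of a holomorphic function are harmonic. -/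
lemma aux_harmonic_of_holo (f : ℂ → ℂ) (s : Set ℂ) (hs : IsOpen s)
    (hf : DifferentiableOn ℂ f s) :
    HarmonicOnSet (fun z => (f z).re) s ∧ HarmonicOnSet (fun z => (f z).im) s := by
  have hA : AnalyticOnNhd ℂ f s := hf.analyticOnNhd hs
  have hd : ∀ w ∈ s, DifferentiableAt ℂ f w := fun w hw => hf.differentiableAt (hs.mem_nhds hw)
  have hd' : ∀ w ∈ s, DifferentiableAt ℂ (deriv f) w := fun w hw =>
    (hA.deriv w hw).differentiableAt
  have hdI : ∀ w ∈ s, DifferentiableAt ℂ (fun u => deriv f u * Complex.I) w := fun w hw =>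
    (hd' w hw).mul_const _
  have hderI : ∀ w ∈ s, deriv (fun u => deriv f u * Complex.I) w
      = deriv (deriv f) w * Complex.I := fun w hw => deriv_mul_const (hd' w hw) _
  have hsm : ContDiffOn ℂ 2 f s := hf.contDiffOn hs
  have hsmR : ContDiffOn ℝ 2 f s := hsm.restrict_scalars ℝ
  constructor
  · refine ⟨Complex.reCLM.contDiff.comp_contDiffOn hsmR, fun z hz => ?_⟩
    have hmem : s ∈ nhds z := hs.mem_nhds hz
    have e1 : px (fun w => (f w).re) =ᶠ[nhds z] fun w => (deriv f w * 1).re := by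
      filter_upwards [hmem] with w hw using aux_fderiv_re_apply f w 1 (hd w hw)
    have e2 : py (fun w => (f w).re) =ᶠ[nhds z] fun w => (deriv f w * Complex.I).re := by
      filter_upwards [hmem] with w hw using aux_fderiv_re_apply f w Complex.I (hd w hw)
    have t1 : px (px (fun w => (f w).re)) z = (deriv (deriv f) z * 1).re := by
      rw [px, e1.fderiv_eq]
      simp only [mul_one]
      simpa using aux_fderiv_re_apply (deriv f) z 1 (hd' z hz)
    have t2 : py (py (fun w => (f w).re)) z
        = ((deriv (deriv f) z * Complex.I) * Complex.I).re := by
      rw [py, e2.fderiv_eq]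
      rw [aux_fderiv_re_apply _ z Complex.I (hdI z hz), hderI z hz]
    rw [t1, t2]
    simp [Complex.mul_re, Complex.I_re, Complex.I_im]
  · refine ⟨Complex.imCLM.contDiff.comp_contDiffOn hsmR, fun z hz => ?_⟩
    have hmem : s ∈ nhds z := hs.mem_nhds hz
    have e1 : px (fun w => (f w).im) =ᶠ[nhds z] fun w => (deriv f w * 1).im := by
      filter_upwards [hmem] with w hw using aux_fderiv_im_apply f w 1 (hd w hw)
    have e2 : py (fun w => (f w).im) =ᶠ[nhds z] fun w => (deriv f w * Complex.I).im := by
      filter_upwards [hmem] with w hw using aux_fderiv_im_apply f w Complex.I (hd w hw)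
    have t1 : px (px (fun w => (f w).im)) z = (deriv (deriv f) z * 1).im := by
      rw [px, e1.fderiv_eq]
      simp only [mul_one]
      simpa using aux_fderiv_im_apply (deriv f) z 1 (hd' z hz)
    have t2 : py (py (fun w => (f w).im)) z
        = ((deriv (deriv f) z * Complex.I) * Complex.I).im := by
      rw [py, e2.fderiv_eq]
      rw [aux_fderiv_im_apply _ z Complex.I (hdI z hz), hderI z hz]
    rw [t1, t2]
    simp [Complex.mul_im, Complex.mul_re, Complex.I_re, Complex.I_im]

/-- Harmonicity only depends on values on the open set. -/
lemma aux_harmonic_congr {f g : ℂ → ℝ} {s : Set ℂ} (hs : IsOpen s)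
    (h : HarmonicOnSet f s) (he : Set.EqOn g f s) : HarmonicOnSet g s := by
  refine ⟨h.1.congr he, fun z hz => ?_⟩
  have hmem : s ∈ nhds z := hs.mem_nhds hz
  have epx : px g =ᶠ[nhds z] px f := by
    filter_upwards [hmem] with w hw
    rw [px, px, (Filter.eventuallyEq_of_mem (hs.mem_nhds hw) he).fderiv_eq]
  have epy : py g =ᶠ[nhds z] py f := by
    filter_upwards [hmem] with w hw
    rw [py, py, (Filter.eventuallyEq_of_mem (hs.mem_nhds hw) he).fderiv_eq]
  have t1 : px (px g) z = px (px f) z := by rw [px, px, epx.fderiv_eq]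
  have t2 : py (py g) z = py (py f) z := by rw [py, py, epy.fderiv_eq]
  rw [t1, t2]
  exact h.2 z hz

lemma aux_denRho_eq (ρ : ℝ) (z : ℂ) : denRho ρ z = Complex.normSq ((ρ:ℂ)*z - 1) := by
  simp [denRho, Complex.normSq_apply, Complex.mul_re, Complex.mul_im, Complex.sub_re,
    Complex.sub_im]
  ring

lemma aux_g_eq (ρ : ℝ) (z : ℂ) (h : (ρ:ℂ)*z - 1 ≠ 0) :
    gRho1 ρ z = (2*z^2/((ρ:ℂ)*z-1)^2).re ∧ gRho2 ρ z = (2*z^2/((ρ:ℂ)*z-1)^2).im := by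
  have hn : Complex.normSq ((ρ:ℂ)*z-1) ≠ 0 := (Complex.normSq_pos.2 h).ne'
  have hd := aux_denRho_eq ρ z
  constructor
  · rw [gRho1, Complex.div_re]
    simp only [map_pow, hd, Complex.mul_re, Complex.mul_im, Complex.sub_re,
      Complex.sub_im, Complex.one_re, Complex.one_im, Complex.ofReal_re, Complex.ofReal_im,
      Complex.normSq_apply, pow_two, Complex.re_ofNat, Complex.im_ofNat]
    simp only [Complex.normSq_apply, Complex.sub_re, Complex.sub_im, Complex.mul_re,
      Complex.mul_im, Complex.one_re, Complex.one_im, Complex.ofReal_re, Complex.ofReal_im] at hn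
    field_simp
    ring
  · rw [gRho2, Complex.div_im]
    simp only [map_pow, hd, Complex.mul_re, Complex.mul_im, Complex.sub_re,
      Complex.sub_im, Complex.one_re, Complex.one_im, Complex.ofReal_re, Complex.ofReal_im,
      Complex.normSq_apply, pow_two, Complex.re_ofNat, Complex.im_ofNat]
    simp only [Complex.normSq_apply, Complex.sub_re, Complex.sub_im, Complex.mul_re,
      Complex.mul_im, Complex.one_re, Complex.one_im, Complex.ofReal_re, Complex.ofReal_im] at hn
    field_simp
    ring

/-- `g_ρ` has positive denominator on the closed unit disk, each of its components (including
the constant third component `0`) is harmonic in the open unit disk, and on the unit circle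
it coincides with `g̃_ρ`; i.e. `g_ρ` is the harmonic extension of `g̃_ρ` to the disk. -/
theorem g_rho_harmonic_extension (ρ : ℝ) (hρ : ρ ∈ Set.Ioo (0 : ℝ) 1) :
    (∀ z ∈ closedBall (0 : ℂ) 1, 0 < denRho ρ z) ∧
    HarmonicOnSet (gRho1 ρ) (ball (0 : ℂ) 1) ∧
    HarmonicOnSet (gRho2 ρ) (ball (0 : ℂ) 1) ∧
    HarmonicOnSet (fun _ => (0 : ℝ)) (ball (0 : ℂ) 1) ∧
    (∀ z ∈ sphere (0 : ℂ) 1,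
      gRho1 ρ z = 2 * (((z.re - ρ) ^ 2 - z.im ^ 2) / ((z.re - ρ) ^ 2 + z.im ^ 2) ^ 2) ∧
      gRho2 ρ z = 2 * (2 * (z.re - ρ) * z.im / ((z.re - ρ) ^ 2 + z.im ^ 2) ^ 2)) := by
  obtain ⟨hρ0, hρ1⟩ := hρ
  have hne : ∀ z ∈ closedBall (0 : ℂ) 1, (ρ:ℂ)*z - 1 ≠ 0 := by
    intro z hz hcontra
    have h1 : (ρ:ℂ)*z = 1 := by linear_combination hcontra
    have h2 : ‖(ρ:ℂ)*z‖ < 1 := by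
      rw [norm_mul, Complex.norm_real, Real.norm_eq_abs, abs_of_pos hρ0]
      have hz1 : ‖z‖ ≤ 1 := mem_closedBall_zero_iff.1 hz
      calc ρ * ‖z‖ ≤ ρ * 1 := by nlinarith [norm_nonneg z]
        _ < 1 := by linarith
    rw [h1, norm_one] at h2
    exact absurd h2 (lt_irrefl 1)
  refine ⟨?_, ?_, ?_, ?_, ?_⟩
  · intro z hz
    rw [aux_denRho_eq]
    exact Complex.normSq_pos.2 (hne z hz)
  · -- gRho1 harmonic
    have hF : DifferentiableOn ℂ (fun z : ℂ => 2*z^2/((ρ:ℂ)*z-1)^2) (ball (0:ℂ) 1) := by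
      apply DifferentiableOn.div
      · exact ((differentiable_const (2:ℂ)).mul (differentiable_pow 2)).differentiableOn
      · exact ((((differentiable_const ((ρ:ℂ))).mul differentiable_id).sub
          (differentiable_const 1)).pow 2).differentiableOn
      · intro z hz
        exact pow_ne_zero 2 (hne z (ball_subset_closedBall hz))
    have hharm := (aux_harmonic_of_holo _ _ isOpen_ball hF).1
    exact aux_harmonic_congr isOpen_ball hharm
      (fun z hz => (aux_g_eq ρ z (hne z (ball_subset_closedBall hz))).1)
  · have hF : DifferentiableOn ℂ (fun z : ℂ => 2*z^2/((ρ:ℂ)*z-1)^2) (ball (0:ℂ) 1) := by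
      apply DifferentiableOn.div
      · exact ((differentiable_const (2:ℂ)).mul (differentiable_pow 2)).differentiableOn
      · exact ((((differentiable_const ((ρ:ℂ))).mul differentiable_id).sub
          (differentiable_const 1)).pow 2).differentiableOn
      · intro z hz
        exact pow_ne_zero 2 (hne z (ball_subset_closedBall hz))
    have hharm := (aux_harmonic_of_holo _ _ isOpen_ball hF).2
    exact aux_harmonic_congr isOpen_ball hharm
      (fun z hz => (aux_g_eq ρ z (hne z (ball_subset_closedBall hz))).2)
  · -- zero function harmonic
    refine ⟨contDiffOn_const, fun z hz => ?_⟩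
    have h0 : px (fun _ => (0:ℝ)) = fun _ => 0 := by
      funext w; simp [px]
    have h0' : py (fun _ => (0:ℝ)) = fun _ => 0 := by
      funext w; simp [py]
    rw [h0, h0']
    simp [px, py]
  · -- boundary values
    intro z hz
    have h1 : z.re ^ 2 + z.im ^ 2 = 1 := by
      have hn : ‖z‖ = 1 := mem_sphere_zero_iff_norm.1 hz
      have : Complex.normSq z = 1 := by
        rw [Complex.normSq_eq_norm_sq, hn]; norm_num
      rw [Complex.normSq_apply] at this
      nlinarith [this]
    have hden2 : ρ ^ 2 * 1 - 2 * ρ * z.re + 1 = (z.re - ρ) ^ 2 + z.im ^ 2 := by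
      nlinarith [h1]
    constructor
    · rw [gRho1, denRho, h1, hden2]
      congr 1
      ring
    · rw [gRho2, denRho, h1, hden2]
      congr 1
      ring
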